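/- arXiv:2501.11419 — 2 statements merged into one kernel-verified Lean document; each statement's English description precedes it below -/
import Mathlib

section
/- Dijkstra-style greedy correctness for consistent fees: let G = (V,E) be a finite directed graph with consistent, nonnegative fee functions f_e on arcs, source t, and initial amount a ≥ 0. Define d(v) as the infimum over paths p from t to v of the accumulated amount c(p,a) (d(t) = a, d(v) = ∞ if no path exists). Then d satisfies the Bellman equations: for every vertex v ≠ t reachable from t, d(v) = min over arcs (u,v) ∈ E of d(u) + f_{(u,v)}(d(u)). -/
open NNReal ENNReal

/-- A path in a directed graph, given as the list of its vertices. -/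
def IsVPath {V : Type*} (Adj : V → V → Prop) (t v : V) (p : List V) : Prop :=
  p.Chain' Adj ∧ p.head? = some t ∧ p.getLast? = some v

/-- The accumulated amount computed forward along a vertex list. -/
def vcost {V : Type*} (fee : V → V → ℝ≥0 → ℝ≥0) : List V → ℝ≥0 → ℝ≥0
  | [], a => a
  | [_], a => a
  | u :: v :: rest, a => vcost fee (v :: rest) (a + fee u v a)

section Aux

variable {V : Type*} (fee : V → V → ℝ≥0 → ℝ≥0)

lemma vcost_le_self : ∀ (p : List V) (a : ℝ≥0), a ≤ vcost fee p a
  | [], _ => le_rfl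
  | [_], _ => le_rfl
  | u :: v :: rest, a =>
      le_trans le_self_add (vcost_le_self (v :: rest) (a + fee u v a))

lemma vcost_mono (hfee : ∀ u v, ∀ x y : ℝ≥0, x ≤ y → x + fee u v x ≤ y + fee u v y) :
    ∀ (p : List V) {a b : ℝ≥0}, a ≤ b → vcost fee p a ≤ vcost fee p b
  | [], _, _, h => h
  | [_], _, _, h => h
  | u :: v :: rest, a, b, h => vcost_mono hfee (v :: rest) (hfee u v a b h)

lemma vcost_append : ∀ (p1 : List V) (w : V) (p2 : List V) (a : ℝ≥0),
    vcost fee (p1 ++ w :: p2) a = vcost fee (w :: p2) (vcost fee (p1 ++ [w]) a)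
  | [], w, p2, a => by simp [vcost]
  | [u], w, p2, a => by simp [vcost]
  | u :: x :: p1', w, p2, a => by
      simp only [List.cons_append, vcost]
      exact vcost_append (x :: p1') w p2 (a + fee u x a)

lemma vcost_concat (q : List V) (u v : V) (hu : q.getLast? = some u) (a : ℝ≥0) :
    vcost fee (q ++ [v]) a = vcost fee q a + fee u v (vcost fee q a) := by
  rcases q.eq_nil_or_concat' with rfl | ⟨q', b, rfl⟩
  · simp at hu
  · rw [List.getLast?_concat] at hu
    injection hu with h
    subst h
    have h := vcost_append fee q' b [v] a
    rw [show q' ++ [b] ++ [v] = q' ++ b :: [v] by simp, h]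
    rfl

variable {Adj : V → V → Prop}

lemma shortcut_path
    (hfee : ∀ u v, ∀ x y : ℝ≥0, x ≤ y → x + fee u v x ≤ y + fee u v y)
    {t v : V} (a : ℝ≥0) (l1 l2 l3 : List V) (x : V)
    (hp : IsVPath Adj t v (l1 ++ x :: (l2 ++ x :: l3))) :
    IsVPath Adj t v (l1 ++ x :: l3) ∧
      vcost fee (l1 ++ x :: l3) a ≤ vcost fee (l1 ++ x :: (l2 ++ x :: l3)) a := by
  obtain ⟨hc, hh, hg⟩ := hp
  constructor
  · refine ⟨?_, ?_, ?_⟩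
    · unfold List.Chain' at hc ⊢
      rw [List.isChain_append] at hc ⊢
      obtain ⟨hc1, hc2, hc3⟩ := hc
      refine ⟨hc1, ?_, ?_⟩
      · have he : (x :: l2) ++ x :: l3 = x :: (l2 ++ x :: l3) := by simp
        rw [← he, List.isChain_append] at hc2
        exact hc2.2.1
      · intro y hy z hz
        exact hc3 y hy z (by simpa using hz)
    · rw [List.head?_append] at hh ⊢
      simpa using hh
    · rw [List.getLast?_append_cons] at hg ⊢
      have he : (x :: (l2 ++ x :: l3)) = (x :: l2) ++ x :: l3 := by simp
      rw [he, List.getLast?_append_cons] at hg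
      exact hg
  · rw [vcost_append fee l1 x l3 a, vcost_append fee l1 x (l2 ++ x :: l3) a]
    set b := vcost fee (l1 ++ [x]) a with hb
    have h2 : vcost fee (x :: (l2 ++ x :: l3)) b
        = vcost fee (x :: l3) (vcost fee ((x :: l2) ++ [x]) b) := by
      have := vcost_append fee (x :: l2) x l3 b
      simpa using this
    rw [h2]
    exact vcost_mono fee hfee _ (vcost_le_self fee _ b)

lemma exists_nodup_path
    (hfee : ∀ u v, ∀ x y : ℝ≥0, x ≤ y → x + fee u v x ≤ y + fee u v y)
    (t v : V) (a : ℝ≥0) :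
    ∀ (n : ℕ) (p : List V), p.length ≤ n → IsVPath Adj t v p →
      ∃ q, IsVPath Adj t v q ∧ q.Nodup ∧ vcost fee q a ≤ vcost fee p a := by
  intro n
  induction n with
  | zero =>
      intro p hl hp
      rw [Nat.le_zero, List.length_eq_zero_iff] at hl
      subst hl
      simp [IsVPath] at hp
  | succ n ih =>
      intro p hl hp
      by_cases hnd : p.Nodup
      · exact ⟨p, hp, hnd, le_rfl⟩
      · obtain ⟨x, hx⟩ := List.exists_duplicate_iff_not_nodup.2 hnd
        rw [List.duplicate_iff_sublist] at hx
        obtain ⟨r1, r2, hpr, hxr1, hx2⟩ := List.cons_sublist_iff.1 hx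
        obtain ⟨s1, s2, hrs, hxs1, -⟩ := List.cons_sublist_iff.1 hx2
        obtain ⟨a1, b1, rfl⟩ := List.append_of_mem hxr1
        obtain ⟨a2, b2, rfl⟩ := List.append_of_mem hxs1
        subst hrs
        have hpeq : p = a1 ++ x :: ((b1 ++ a2) ++ x :: (b2 ++ s2)) := by
          rw [hpr]; simp
        subst hpeq
        obtain ⟨hpath, hcost⟩ :=
          shortcut_path fee hfee a a1 (b1 ++ a2) (b2 ++ s2) x hp
        have hlen : (a1 ++ x :: (b2 ++ s2)).length ≤ n := by
          simp only [List.length_append, List.length_cons] at hl ⊢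
          omega
        obtain ⟨q, hq, hqnd, hqle⟩ := ih _ hlen hpath
        exact ⟨q, hq, hqnd, hqle.trans hcost⟩

end Aux

/-- Bellman equations for the lowest accumulated cost function `d` in a finite
directed graph with consistent fee functions: for every vertex `v ≠ t`
reachable from `t`, `d v` equals the minimum over in-arcs `(u,v)` of
`d u + f_{(u,v)}(d u)`. -/
theorem bellman_equations (V : Type*) [Fintype V] (Adj : V → V → Prop)
    (fee : V → V → ℝ≥0 → ℝ≥0)
    (hfee : ∀ u v, ∀ x y : ℝ≥0, x ≤ y → x + fee u v x ≤ y + fee u v y)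
    (t : V) (a : ℝ≥0)
    (d : V → ℝ≥0∞)
    (hd : ∀ v, d v = ⨅ p ∈ {p : List V | IsVPath Adj t v p},
      ((vcost fee p a : ℝ≥0) : ℝ≥0∞)) :
    ∀ v, v ≠ t → (∃ p, IsVPath Adj t v p) →
      d v = ⨅ u ∈ {u | Adj u v}, (d u + (fee u v (d u).toNNReal : ℝ≥0∞)) := by
  classical
  -- the infimum over paths is attained
  have attain : ∀ w : V, (∃ p, IsVPath Adj t w p) →
      ∃ p, IsVPath Adj t w p ∧ ((vcost fee p a : ℝ≥0) : ℝ≥0∞) = d w := by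
    intro w ⟨p0, hp0⟩
    set S : Set ℝ≥0∞ :=
      (fun p => ((vcost fee p a : ℝ≥0) : ℝ≥0∞)) ''
        {p : List V | IsVPath Adj t w p ∧ p.Nodup} with hS
    have hfin : S.Finite := by
      apply Set.Finite.image
      apply Set.Finite.subset (List.finite_length_le V (Fintype.card V))
      intro l hl
      exact hl.2.length_le_card
    have hne : S.Nonempty := by
      obtain ⟨q, hq, hqnd, -⟩ :=
        exists_nodup_path fee hfee t w a p0.length p0 le_rfl hp0
      exact ⟨_, ⟨q, ⟨hq, hqnd⟩, rfl⟩⟩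
    have hmem := hne.csInf_mem hfin
    rw [hS] at hmem
    obtain ⟨q, ⟨hq, hqnd⟩, hq2⟩ := hmem
    have hq2' : ((vcost fee q a : ℝ≥0) : ℝ≥0∞) = sInf S := hq2
    refine ⟨q, hq, ?_⟩
    rw [hq2', hd w]
    apply le_antisymm
    · apply le_iInf₂
      intro p hp
      obtain ⟨q', hq', hq'nd, hle⟩ :=
        exists_nodup_path fee hfee t w a p.length p le_rfl hp
      calc sInf S ≤ ((vcost fee q' a : ℝ≥0) : ℝ≥0∞) :=
            csInf_le (OrderBot.bddBelow _) ⟨q', ⟨hq', hq'nd⟩, rfl⟩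
        _ ≤ _ := by exact_mod_cast hle
    · apply le_csInf hne
      rintro b ⟨q', ⟨hq', -⟩, rfl⟩
      exact iInf₂_le q' hq'
  intro v hvt ⟨p0, hp0⟩
  apply le_antisymm
  · -- d v ≤ min over in-arcs
    apply le_iInf₂
    intro u hu
    by_cases hdu : d u = ⊤
    · simp [hdu]
    · have hune : ∃ p, IsVPath Adj t u p := by
        by_contra h
        rw [hd u] at hdu
        apply hdu
        rw [iInf₂_eq_top]
        intro p hp
        exact absurd ⟨p, hp⟩ h
      obtain ⟨p, hp, hpc⟩ := attain u hune
      have hpne : p ≠ [] := by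
        intro h; subst h; simp [IsVPath] at hp
      have hpath : IsVPath Adj t v (p ++ [v]) := by
        obtain ⟨hc, hh, hg⟩ := hp
        refine ⟨?_, ?_, ?_⟩
        · exact hc.append (List.isChain_singleton v)
            (by intro y hy z hz
                simp only [List.head?_cons, Option.mem_def, Option.some.injEq] at hz
                subst hz
                rw [hg] at hy
                obtain rfl : u = y := by simpa using hy
                exact hu)
        · rw [List.head?_append, hh]; rfl
        · exact List.getLast?_concat (l := p)
      have hcost : vcost fee (p ++ [v]) a
          = vcost fee p a + fee u v (vcost fee p a) :=
        vcost_concat fee p u v hp.2.2 a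
      have htn : (d u).toNNReal = vcost fee p a := by
        rw [← hpc]; simp
      calc d v ≤ ((vcost fee (p ++ [v]) a : ℝ≥0) : ℝ≥0∞) := by
            rw [hd v]; exact iInf₂_le _ hpath
        _ = d u + (fee u v (d u).toNNReal : ℝ≥0∞) := by
            rw [hcost, htn, ← hpc]; push_cast; ring
  · -- min over in-arcs ≤ d v
    rw [hd v]
    apply le_iInf₂
    intro p hp
    have hpne : p ≠ [] := by
      intro h; subst h; simp [IsVPath] at hp
    obtain ⟨q, w, rfl⟩ := (List.eq_nil_or_concat' p).resolve_left hpne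
    obtain ⟨hc, hh, hg⟩ := hp
    obtain rfl : v = w := by
      rw [List.getLast?_concat] at hg; injection hg with h; exact h.symm
    have hqne : q ≠ [] := by
      rintro rfl
      simp only [List.nil_append, List.head?_cons] at hh
      injection hh with h
      exact hvt h
    obtain ⟨q', u, rfl⟩ := (List.eq_nil_or_concat' q).resolve_left hqne
    have hu' : (q' ++ [u]).getLast? = some u := List.getLast?_concat (l := q')
    unfold List.Chain' at hc
    rw [List.isChain_append] at hc
    obtain ⟨hcq, -, hlink⟩ := hc
    have hadj : Adj u v := hlink u hu' v rfl
    have hqpath : IsVPath Adj t u (q' ++ [u]) := by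
      refine ⟨hcq, ?_, hu'⟩
      rwa [List.head?_append_of_ne_nil _ hqne] at hh
    have hdu_le : d u ≤ ((vcost fee (q' ++ [u]) a : ℝ≥0) : ℝ≥0∞) := by
      rw [hd u]; exact iInf₂_le _ hqpath
    have hdut : d u ≠ ⊤ := ne_top_of_le_ne_top coe_ne_top hdu_le
    have hdueq : ((d u).toNNReal : ℝ≥0∞) = d u := ENNReal.coe_toNNReal hdut
    set b := (d u).toNNReal with hb
    have hble : b ≤ vcost fee (q' ++ [u]) a := by
      rw [← ENNReal.coe_le_coe, hdueq]; exact hdu_le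
    have hkey : b + fee u v b
        ≤ vcost fee (q' ++ [u]) a + fee u v (vcost fee (q' ++ [u]) a) :=
      hfee u v _ _ hble
    have hcost : vcost fee ((q' ++ [u]) ++ [v]) a
        = vcost fee (q' ++ [u]) a + fee u v (vcost fee (q' ++ [u]) a) :=
      vcost_concat fee _ u v hu' a
    have h1 : (⨅ w ∈ {w | Adj w v}, (d w + (fee w v (d w).toNNReal : ℝ≥0∞)))
        ≤ d u + (fee u v (d u).toNNReal : ℝ≥0∞) := iInf_le_of_le u (iInf_le _ hadj)
    refine le_trans h1 ?_
    calc d u + (fee u v (d u).toNNReal : ℝ≥0∞)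
        = ((b + fee u v b : ℝ≥0) : ℝ≥0∞) := by
          rw [← hb, ← hdueq, ← ENNReal.coe_add]
      _ ≤ ((vcost fee ((q' ++ [u]) ++ [v]) a : ℝ≥0) : ℝ≥0∞) := by
          rw [hcost]; exact_mod_cast hkey
end

section
/- Early-termination correctness of the partial bidirectional search: let G = (V,E) be a finite directed graph with consistent nonnegative fee functions, and suppose every arc out of the source s has zero fee (f_{(s,v)} ≡ 0 for all arcs (s,v)). Working in the transpose graph, if v minimizes d(v) := min over paths from t to v of the accumulated cost, among all vertices v with an arc (v,s) in the transpose (i.e., (s,v) ∈ E), then appending the arc (v,s) to a lowest-fee path from t to v yields a lowest-fee path from t to s, provided that for every such in-neighbour u of s the final arc has zero fee. -/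
open NNReal

lemma vcost_concat_s17 {V : Type*} (fee : V → V → ℝ≥0 → ℝ≥0) :
    ∀ (l : List V) (hl : l ≠ []) (w : V) (a : ℝ≥0),
      vcost fee (l ++ [w]) a
        = vcost fee l a + fee (l.getLast hl) w (vcost fee l a)
  | [], hl, _, _ => absurd rfl hl
  | [x], _, w, a => by simp [vcost]
  | x :: y :: rest, _, w, a => by
      simpa [vcost, List.getLast] using
        vcost_concat_s17 fee (y :: rest) (by simp) w (a + fee x y a)

/-- Early-termination correctness of the partial bidirectional search (in the
transpose graph): if every arc into `s` has zero fee and `v` is an in-neighbour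
of `s` whose lowest-fee path `p` from `t` has accumulated cost at most that of
every path from `t` to any in-neighbour of `s`, then appending the arc `(v,s)`
to `p` yields a lowest-fee path from `t` to `s`. -/
theorem partial_bidirectional_early_termination (V : Type*) [Fintype V]
    (Adj : V → V → Prop) (fee : V → V → ℝ≥0 → ℝ≥0)
    (hfee : ∀ u v, ∀ x y : ℝ≥0, x ≤ y → x + fee u v x ≤ y + fee u v y)
    (t s v : V) (hts : t ≠ s) (a : ℝ≥0)
    (hzero : ∀ u, Adj u s → ∀ x, fee u s x = 0)
    (hvs : Adj v s) (p : List V) (hp : IsVPath Adj t v p)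
    (hmin : ∀ u, Adj u s → ∀ q, IsVPath Adj t u q →
      vcost fee p a ≤ vcost fee q a) :
    IsVPath Adj t s (p ++ [s]) ∧
      ∀ q, IsVPath Adj t s q → vcost fee (p ++ [s]) a ≤ vcost fee q a := by
  obtain ⟨hc, hh, hl⟩ := hp
  have hpne : p ≠ [] := by rintro rfl; simp at hh
  have hplast : p.getLast hpne = v := by
    rw [List.getLast?_eq_getLast hpne] at hl; exact Option.some.inj hl
  have hcost : vcost fee (p ++ [s]) a = vcost fee p a := by
    rw [vcost_concat_s17 fee p hpne s a, hplast, hzero v hvs, add_zero]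
  constructor
  · refine ⟨List.isChain_append.mpr ⟨hc, List.isChain_singleton s, ?_⟩, ?_, ?_⟩
    · intro x hx y hy
      rw [hl] at hx
      simp at hx hy; subst hx; subst hy; exact hvs
    · cases p with
      | nil => exact absurd rfl hpne
      | cons x l => simpa using hh
    · simp
  · intro q hq
    obtain ⟨hqc, hqh, hql⟩ := hq
    have hqne : q ≠ [] := by rintro rfl; simp at hqh
    have hqlast : q.getLast hqne = s := by
      rw [List.getLast?_eq_getLast hqne] at hql; exact Option.some.inj hql
    have hqeq : q = q.dropLast ++ [s] := by
      conv_lhs => rw [← List.dropLast_append_getLast hqne, hqlast]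
    have hq'ne : q.dropLast ≠ [] := by
      intro h
      rw [hqeq, h] at hqh
      simp at hqh
      exact hts hqh.symm
    set q' := q.dropLast with hq'def
    have hq'c : q'.Chain' Adj := (List.isChain_append.mp (hqeq ▸ hqc)).1
    have hadj : Adj (q'.getLast hq'ne) s := by
      have := (List.isChain_append.mp (hqeq ▸ hqc)).2.2
      exact this _ (by rw [List.getLast?_eq_getLast hq'ne]; rfl) s rfl
    have hq'h : q'.head? = some t := by
      rw [hqeq] at hqh
      rcases hq''' : q' with _ | ⟨x, l⟩
      · exact absurd hq''' hq'ne
      · rw [hq'''] at hqh; simpa using hqh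
    have hq'path : IsVPath Adj t (q'.getLast hq'ne) q' :=
      ⟨hq'c, hq'h, List.getLast?_eq_getLast hq'ne⟩
    have : vcost fee q a = vcost fee q' a := by
      rw [hqeq, vcost_concat_s17 fee q' hq'ne s a, hzero _ hadj, add_zero]
    rw [this, hcost]
    exact hmin _ hadj q' hq'path
end
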